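/- Fix a positive integer N, real parameters λ > 0, α > 0 and a with λa > −1, and 0 ≤ p ≤ N. Let I_p^{(λ₁,λ₂)}(x) = (p!(N−p)!/N!) ∫_{(0,1)^N} ∏_{l=1}^N t_l^{λ₁}(1 − t_l)^{λ₂} |x − t_l|^{α−1} ∏_{1≤j<k≤N} |t_k − t_j|^{2λ} e_p(x − t_1, …, x − t_N) dt_1⋯dt_N denote the Jacobi auxiliary integral, and let L_p(x) = (p!(N−p)!/N!) ∫_{(0,∞)^N} ∏_{l=1}^N t_l^{λa} e^{−λ t_l} |x − t_l|^{α−1} ∏_{1≤j<k≤N} |t_k − t_j|^{2λ} e_p(x − t_1, …, x − t_N) dt_1⋯dt_N denote the Laguerre auxiliary integral (weight t^{aβ/2} e^{−βt/2} with β = 2λ). Then for every x > 0, L_p(x) = lim_{n→∞} n^{N(λa + α) + λN(N−1) + p} I_p^{(λa, λn)}( x/n ). -/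

import Mathlib

open MeasureTheory Filter Finset

noncomputable section

/-- Vandermonde-type product `∏_{j<k} |t k - t j| ^ γ`. -/
def vdm (n : ℕ) (γ : ℝ) (t : Fin n → ℝ) : ℝ :=
  ∏ p ∈ Finset.univ.filter (fun p : Fin n × Fin n => p.1 < p.2), |t p.2 - t p.1| ^ γ

/-- The elementary symmetric polynomial `e_p(t_1, …, t_n)`. -/
def esym (n : ℕ) (p : ℕ) (t : Fin n → ℝ) : ℝ :=
  ∑ s ∈ Finset.univ.powersetCard p, ∏ j ∈ s, t j

/-- The unit cube `(0,1)^n`. -/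
def unitCube (n : ℕ) : Set (Fin n → ℝ) := Set.univ.pi fun _ => Set.Ioo (0 : ℝ) 1

/-- The positive orthant `(0, ∞)^n`. -/
def posOrthant (n : ℕ) : Set (Fin n → ℝ) := Set.univ.pi fun _ => Set.Ioi (0 : ℝ)

/-- The Jacobi auxiliary Selberg-type integral `I_p^{(λ₁,λ₂)}(x)` with weight
`t^{λ₁}(1-t)^{λ₂}` on `(0,1)`, Vandermonde exponent `2λ` and parameter `α`. -/
def Jaux (N : ℕ) (lam α lam₁ lam₂ : ℝ) (p : ℕ) (x : ℝ) : ℝ :=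
  ((p.factorial : ℝ) * ((N - p).factorial : ℝ) / (N.factorial : ℝ)) *
    ∫ t in unitCube N,
      (∏ l, t l ^ lam₁ * (1 - t l) ^ lam₂ * |x - t l| ^ (α - 1)) *
        vdm N (2 * lam) t * esym N p (fun l => x - t l)

/-- The Laguerre auxiliary Selberg-type integral `L_p(x)` with weight
`t^{λa} e^{-λt}` (i.e. `t^{aβ/2} e^{-βt/2}` with `β = 2λ`), Vandermonde exponent `2λ`
and parameter `α`. -/
def Laux (N : ℕ) (lam α a : ℝ) (p : ℕ) (x : ℝ) : ℝ :=
  ((p.factorial : ℝ) * ((N - p).factorial : ℝ) / (N.factorial : ℝ)) *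
    ∫ t in posOrthant N,
      (∏ l, t l ^ (lam * a) * Real.exp (-lam * t l) * |x - t l| ^ (α - 1)) *
        vdm N (2 * lam) t * esym N p (fun l => x - t l)


section AuxLemmas

lemma myCardPairs (N : ℕ) :
    2 * ((Finset.univ.filter (fun q : Fin N × Fin N => q.1 < q.2)).card) = N * (N - 1) := by
  have h1 : (Finset.univ.filter (fun q : Fin N × Fin N => q.1 < q.2)).card
      = ∑ k : Fin N, (k : ℕ) := by
    rw [Finset.card_filter, Fintype.sum_prod_type_right]
    congr 1
    ext k
    rw [← Finset.card_filter]
    have h2 : Finset.univ.filter (fun i : Fin N => i < k) = Finset.Iio k := by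
      ext i; simp
    rw [h2, Fin.card_Iio]
  rw [h1]
  have h2 := Fin.sum_univ_eq_sum_range (fun i => i) N
  rw [h2, mul_comm, Finset.sum_range_id_mul_two]

lemma intervalIntegrable_abs_rpow {r : ℝ} (hr : -1 < r) (a b : ℝ) :
    IntervalIntegrable (fun u => |u| ^ r) volume a b := by
  have h : ∀ c : ℝ, 0 ≤ c → IntervalIntegrable (fun u : ℝ => |u| ^ r) volume 0 c := by
    intro c hc
    rw [intervalIntegrable_iff, Set.uIoc_of_le hc]
    have h0 := intervalIntegral.intervalIntegrable_rpow' (a := 0) (b := c) hr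
    rw [intervalIntegrable_iff, Set.uIoc_of_le hc] at h0
    exact h0.congr_fun (fun u hu => by rw [abs_of_pos hu.1]) measurableSet_Ioc
  have h' : ∀ c : ℝ, IntervalIntegrable (fun u : ℝ => |u| ^ r) volume 0 c := by
    intro c
    rcases le_or_gt 0 c with hc | hc
    · exact h c hc
    · rw [IntervalIntegrable.iff_comp_neg]
      simpa using h (-c) (by linarith)
  exact (h' a).symm.trans (h' b)

lemma intervalIntegrable_abs_sub_rpow {r : ℝ} (hr : -1 < r) (x a b : ℝ) :
    IntervalIntegrable (fun u => |x - u| ^ r) volume a b := by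
  simpa using (intervalIntegrable_abs_rpow hr (x - a) (x - b)).comp_sub_left x

lemma rpow_le_between {u v w r : ℝ} (hu : 0 < u) (h1 : u ≤ w) (h2 : w ≤ v) :
    w ^ r ≤ u ^ r + v ^ r := by
  rcases le_or_gt 0 r with hr | hr
  · have h3 : w ^ r ≤ v ^ r := Real.rpow_le_rpow (by linarith) h2 hr
    have h4 : (0:ℝ) ≤ u ^ r := Real.rpow_nonneg hu.le r
    linarith
  · have h3 : w ^ r ≤ u ^ r := Real.rpow_le_rpow_of_nonpos hu h1 hr.le
    have h4 : (0:ℝ) ≤ v ^ r := Real.rpow_nonneg (by linarith) r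
    linarith

lemma mul_le_mul5 {a1 b1 a2 b2 a3 b3 a4 b4 a5 b5 : ℝ}
    (h1 : a1 ≤ b1) (h2 : a2 ≤ b2) (h3 : a3 ≤ b3) (h4 : a4 ≤ b4) (h5 : a5 ≤ b5)
    (n1 : 0 ≤ a1) (n2 : 0 ≤ a2) (n3 : 0 ≤ a3) (n4 : 0 ≤ a4) (n5 : 0 ≤ a5) :
    a1 * a2 * a3 * a4 * a5 ≤ b1 * b2 * b3 * b4 * b5 := by
  have m1 : 0 ≤ b1 := le_trans n1 h1
  have m2 : 0 ≤ b2 := le_trans n2 h2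
  have m3 : 0 ≤ b3 := le_trans n3 h3
  have m4 : 0 ≤ b4 := le_trans n4 h4
  exact mul_le_mul (mul_le_mul (mul_le_mul (mul_le_mul h1 h2 n2 m1) h3 n3
    (mul_nonneg m1 m2)) h4 n4 (mul_nonneg (mul_nonneg m1 m2) m3)) h5 n5
    (mul_nonneg (mul_nonneg (mul_nonneg m1 m2) m3) m4)

lemma measurable_gbound (lam α b M x : ℝ) :
    Measurable (fun u : ℝ => u ^ b * Real.exp (-lam * u) * |x - u| ^ (α - 1)
      * (1 + u) ^ M * (1 + x + u)) := by
  fun_prop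

lemma integrable_gbound {lam α b M x : ℝ} (hlam : 0 < lam) (hα : 0 < α) (hb : -1 < b)
    (hM : 0 ≤ M) (hx : 0 < x) :
    IntegrableOn (fun u : ℝ => u ^ b * Real.exp (-lam * u) * |x - u| ^ (α - 1)
      * (1 + u) ^ M * (1 + x + u)) (Set.Ioi 0) := by
  have hα' : -1 < α - 1 := by linarith
  have hmeas := measurable_gbound lam α b M x
  rw [← Set.Ioc_union_Ioi_eq_Ioi (by positivity : (0:ℝ) ≤ 2*x)]
  apply IntegrableOn.union
  · have lemA : IntegrableOn (fun u : ℝ => u ^ b * |x - u| ^ (α-1)) (Set.Ioc 0 (2*x)) := by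
      rw [← Set.Ioc_union_Ioc_eq_Ioc (by linarith : (0:ℝ) ≤ x/2) (by linarith : x/2 ≤ 2*x)]
      apply IntegrableOn.union
      · set K1 := (x/2) ^ (α-1) + x ^ (α-1) with hK1
        have hint : IntegrableOn (fun u : ℝ => u ^ b) (Set.Ioc 0 (x/2)) := by
          rw [← intervalIntegrable_iff_integrableOn_Ioc_of_le (by linarith)]
          exact intervalIntegral.intervalIntegrable_rpow' hb
        apply Integrable.mono' (hint.const_mul K1)
          ((by fun_prop : Measurable fun u : ℝ => u ^ b * |x - u| ^ (α-1))).aestronglyMeasurable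
        rw [ae_restrict_iff' measurableSet_Ioc]
        filter_upwards with u hu
        have hu0 : (0:ℝ) < u := hu.1
        have habs : |x - u| = x - u := abs_of_pos (by linarith [hu.2] : (0:ℝ) < x - u)
        have hle : |x - u| ^ (α-1) ≤ K1 := by
          rw [habs]; exact rpow_le_between (by linarith) (by linarith [hu.2]) (by linarith)
        rw [Real.norm_eq_abs, abs_of_nonneg (mul_nonneg (Real.rpow_nonneg hu0.le _)
          (Real.rpow_nonneg (abs_nonneg _) _))]
        rw [mul_comm K1]
        exact mul_le_mul_of_nonneg_left hle (Real.rpow_nonneg hu0.le _)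
      · set K2 := (x/2) ^ b + (2*x) ^ b with hK2
        have hint : IntegrableOn (fun u : ℝ => |x - u| ^ (α-1)) (Set.Ioc (x/2) (2*x)) := by
          rw [← intervalIntegrable_iff_integrableOn_Ioc_of_le (by linarith)]
          exact intervalIntegrable_abs_sub_rpow hα' x (x/2) (2*x)
        apply Integrable.mono' (hint.const_mul K2)
          ((by fun_prop : Measurable fun u : ℝ => u ^ b * |x - u| ^ (α-1))).aestronglyMeasurable
        rw [ae_restrict_iff' measurableSet_Ioc]
        filter_upwards with u hu
        have hu0 : (0:ℝ) < u := lt_trans (by linarith) hu.1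
        have hle : u ^ b ≤ K2 := rpow_le_between (by linarith) hu.1.le hu.2
        rw [Real.norm_eq_abs, abs_of_nonneg (mul_nonneg (Real.rpow_nonneg hu0.le _)
          (Real.rpow_nonneg (abs_nonneg _) _))]
        exact mul_le_mul_of_nonneg_right hle (Real.rpow_nonneg (abs_nonneg _) _)
    set C1 := (1 + 2*x) ^ M * (1 + 3*x) with hC1
    apply Integrable.mono' (lemA.const_mul C1) hmeas.aestronglyMeasurable
    rw [ae_restrict_iff' measurableSet_Ioc]
    filter_upwards with u hu
    have hu0 : (0:ℝ) < u := hu.1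
    have nn : (0:ℝ) ≤ u ^ b * Real.exp (-lam * u) * |x - u| ^ (α - 1) * (1 + u) ^ M
        * (1 + x + u) := by
      have h1 := Real.rpow_nonneg hu0.le b
      have h2 := (Real.exp_pos (-lam * u)).le
      have h3 := Real.rpow_nonneg (abs_nonneg (x - u)) (α - 1)
      have h4 := Real.rpow_nonneg (by linarith : (0:ℝ) ≤ 1 + u) M
      have h5 : (0:ℝ) ≤ 1 + x + u := by linarith
      positivity
    rw [Real.norm_eq_abs, abs_of_nonneg nn]
    calc u ^ b * Real.exp (-lam * u) * |x - u| ^ (α - 1) * (1 + u) ^ M * (1 + x + u)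
        ≤ u ^ b * 1 * |x - u| ^ (α - 1) * (1 + 2*x) ^ M * (1 + 3*x) := by
          apply mul_le_mul5 le_rfl
            (Real.exp_le_one_iff.mpr (by nlinarith)) le_rfl
            (Real.rpow_le_rpow (by linarith) (by linarith [hu.2]) hM) (by linarith [hu.2])
            (Real.rpow_nonneg hu0.le b) (Real.exp_pos _).le
            (Real.rpow_nonneg (abs_nonneg _) _)
            (Real.rpow_nonneg (by linarith : (0:ℝ) ≤ 1 + u) M) (by linarith)
      _ = C1 * (u ^ b * |x - u| ^ (α-1)) := by rw [hC1]; ring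
  · have hq : -1 < b + (α - 1) + M + 1 := by linarith
    set q := b + (α - 1) + M + 1 with hqdef
    have hint0 : IntegrableOn (fun u : ℝ => u ^ q * Real.exp (-lam * u)) (Set.Ioi 0) := by
      have h := integrableOn_rpow_mul_exp_neg_mul_rpow hq one_pos hlam
      apply h.congr_fun ?_ measurableSet_Ioi
      intro u hu
      simp only [Real.rpow_one]
    set C2 := (1 + 2 ^ (1-α)) * ((1 + 1/(2*x)) ^ M) * (1/(2*x)*(1+x) + 1) with hC2
    have hint : IntegrableOn (fun u : ℝ => C2 * (u ^ q * Real.exp (-lam * u))) (Set.Ioi (2*x)) :=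
      (hint0.mono_set (Set.Ioi_subset_Ioi (by linarith))).const_mul C2
    apply Integrable.mono' hint hmeas.aestronglyMeasurable
    rw [ae_restrict_iff' measurableSet_Ioi]
    filter_upwards with u hu
    rw [Set.mem_Ioi] at hu
    have hu0 : (0:ℝ) < u := by linarith
    have habs : |x - u| = u - x := by rw [abs_sub_comm]; exact abs_of_pos (by linarith)
    have nn : (0:ℝ) ≤ u ^ b * Real.exp (-lam * u) * |x - u| ^ (α - 1) * (1 + u) ^ M
        * (1 + x + u) := by
      have h1 := Real.rpow_nonneg hu0.le b
      have h2 := (Real.exp_pos (-lam * u)).le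
      have h3 := Real.rpow_nonneg (abs_nonneg (x - u)) (α - 1)
      have h4 := Real.rpow_nonneg (by linarith : (0:ℝ) ≤ 1 + u) M
      have h5 : (0:ℝ) ≤ 1 + x + u := by linarith
      positivity
    rw [Real.norm_eq_abs, abs_of_nonneg nn]
    have b3 : |x - u| ^ (α - 1) ≤ (1 + 2 ^ (1-α)) * u ^ (α-1) := by
      rw [habs]
      rcases le_or_gt 1 α with hc | hc
      · have h6 : (u - x) ^ (α-1) ≤ u ^ (α-1) :=
          Real.rpow_le_rpow (by linarith) (by linarith) (by linarith)
        have hc0 : (0:ℝ) ≤ (2:ℝ) ^ (1-α) := Real.rpow_nonneg (by norm_num) _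
        nlinarith [mul_nonneg hc0 (Real.rpow_nonneg hu0.le (α-1))]
      · have h2u : u/2 ≤ u - x := by linarith
        have h6 : (u - x) ^ (α-1) ≤ (u/2) ^ (α-1) :=
          Real.rpow_le_rpow_of_nonpos (by linarith) h2u (by linarith)
        have hdiv : (u/2) ^ (α-1) = u ^ (α-1) * 2 ^ (1-α) := by
          rw [Real.div_rpow hu0.le (by norm_num : (0:ℝ) ≤ 2), div_eq_mul_inv,
            ← Real.rpow_neg (by norm_num : (0:ℝ) ≤ 2), show -(α-1) = 1-α by ring]
        have hnn := Real.rpow_nonneg hu0.le (α-1)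
        nlinarith
    have b4 : (1 + u) ^ M ≤ (1 + 1/(2*x)) ^ M * u ^ M := by
      rw [← Real.mul_rpow (by positivity) hu0.le]
      apply Real.rpow_le_rpow (by linarith) ?_ hM
      have h6 : (1:ℝ) ≤ u / (2*x) := (one_le_div (by positivity)).mpr hu.le
      have h7 : (1 + 1/(2*x)) * u = u + u/(2*x) := by ring
      nlinarith
    have b5 : 1 + x + u ≤ (1/(2*x)*(1+x) + 1) * u := by
      have h1 : 1 + x ≤ (1+x) * (u / (2*x)) := by
        nlinarith [(one_le_div (by positivity : (0:ℝ) < 2*x)).mpr hu.le]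
      have h2 : (1/(2*x)*(1+x) + 1) * u = (1+x) * (u/(2*x)) + u := by ring
      linarith
    calc u ^ b * Real.exp (-lam * u) * |x - u| ^ (α - 1) * (1 + u) ^ M * (1 + x + u)
        ≤ u ^ b * Real.exp (-lam * u) * ((1 + 2 ^ (1-α)) * u ^ (α-1))
            * ((1 + 1/(2*x)) ^ M * u ^ M) * ((1/(2*x)*(1+x) + 1) * u) := by
          apply mul_le_mul5 le_rfl le_rfl b3 b4 b5
            (Real.rpow_nonneg hu0.le b) (Real.exp_pos _).le
            (Real.rpow_nonneg (abs_nonneg _) _)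
            (Real.rpow_nonneg (by linarith : (0:ℝ) ≤ 1 + u) M) (by linarith)
      _ = C2 * (u ^ q * Real.exp (-lam * u)) := by
          rw [hC2, hqdef, show b + (α - 1) + M + 1 = b + ((α-1) + (M + 1)) by ring,
            Real.rpow_add hu0, Real.rpow_add hu0, Real.rpow_add hu0, Real.rpow_one]
          ring

lemma tendsto_weight (lam : ℝ) (u : ℝ) :
    Tendsto (fun n : ℕ => (1 - u / n) ^ (lam * n)) atTop (nhds (Real.exp (-lam * u))) := by
  have hbase : Tendsto (fun n : ℕ => (1 - u / n) ^ n) atTop (nhds (Real.exp (-u))) := by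
    have h := Real.tendsto_one_add_div_pow_exp (-u)
    refine h.congr (fun n => ?_)
    rw [neg_div, ← sub_eq_add_neg]
  have hcont : ContinuousAt (fun y : ℝ => y ^ lam) (Real.exp (-u)) :=
    Real.continuousAt_rpow_const _ _ (Or.inl (Real.exp_ne_zero _))
  have hcomp := hcont.tendsto.comp hbase
  simp only [Function.comp_def] at hcomp
  rw [← Real.exp_mul, show -u * lam = -lam * u by ring] at hcomp
  apply hcomp.congr'
  filter_upwards [tendsto_natCast_atTop_atTop.eventually_ge_atTop u, eventually_gt_atTop 0]
    with n h1 h2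
  have hn0 : (0:ℝ) < n := by exact_mod_cast h2
  have hbn : (0:ℝ) ≤ 1 - u / n := by
    rw [sub_nonneg, div_le_one hn0]; exact h1
  rw [← Real.rpow_natCast (1 - u / n) n, ← Real.rpow_mul hbn, mul_comm]

end AuxLemmas

open Pointwise

set_option maxHeartbeats 2000000 in
/-- The Laguerre auxiliary integral is the limit of rescaled Jacobi auxiliary integrals:
`L_p(x) = lim_{n→∞} n^{N(λa+α)+λN(N-1)+p} I_p(x/n)` with `λ₁ = λa`, `λ₂ = λn`. -/
theorem laguerre_limit_of_jacobi (N : ℕ) (hN : 0 < N) (lam α a : ℝ)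
    (hlam : 0 < lam) (hα : 0 < α) (ha : -1 < lam * a) (p : ℕ) (hp : p ≤ N)
    (x : ℝ) (hx : 0 < x) :
    Tendsto
      (fun n : ℕ =>
        (n : ℝ) ^ ((N : ℝ) * (lam * a + α) + lam * (N : ℝ) * ((N : ℝ) - 1) + (p : ℝ)) *
          Jaux N lam α (lam * a) (lam * (n : ℝ)) p (x / (n : ℝ)))
      atTop (nhds (Laux N lam α a p x)) := by
  set E : ℝ := (N : ℝ) * (lam * a + α) + lam * (N : ℝ) * ((N : ℝ) - 1) + (p : ℝ) with hE
  set c : ℝ := (p.factorial : ℝ) * ((N - p).factorial : ℝ) / (N.factorial : ℝ) with hc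
  set b : ℝ := lam * a with hb
  set prs : Finset (Fin N × Fin N) :=
    Finset.univ.filter (fun q : Fin N × Fin N => q.1 < q.2) with hprs
  set P : ℕ := prs.card with hPdef
  have hP2 : 2 * (P : ℝ) = (N : ℝ) * ((N : ℝ) - 1) := by
    have h := myCardPairs N
    have h2 : ((2 * P : ℕ) : ℝ) = ((N * (N - 1) : ℕ) : ℝ) := by
      rw [hPdef, hprs, h]
    push_cast [Nat.cast_sub hN] at h2
    linarith
  set M : ℝ := 2 * lam * P with hM
  have hM0 : 0 ≤ M := by positivity
  set G : (Fin N → ℝ) → ℝ := fun s =>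
    (∏ l, s l ^ b * Real.exp (-lam * s l) * |x - s l| ^ (α - 1)) *
      vdm N (2 * lam) s * esym N p (fun l => x - s l) with hG
  set Gn : ℕ → (Fin N → ℝ) → ℝ := fun n s =>
    (∏ l, s l ^ b * (1 - s l / (n : ℝ)) ^ (lam * (n : ℝ)) * |x - s l| ^ (α - 1)) *
      vdm N (2 * lam) s * esym N p (fun l => x - s l) with hGn
  set cube : ℕ → Set (Fin N → ℝ) := fun n => Set.univ.pi fun _ => Set.Ioo (0 : ℝ) n with hcube
  set F : ℕ → (Fin N → ℝ) → ℝ := fun n => (cube n).indicator (Gn n) with hF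
  set Fl : (Fin N → ℝ) → ℝ := (posOrthant N).indicator G with hFl
  set g1 : ℝ → ℝ := fun u => u ^ b * Real.exp (-lam * u) * |x - u| ^ (α - 1)
    * (1 + u) ^ M * (1 + x + u) with hg1
  set B : (Fin N → ℝ) → ℝ := fun s => ∏ l, (Set.Ioi (0 : ℝ)).indicator g1 (s l) with hB
  have hcube_meas : ∀ n : ℕ, MeasurableSet (cube n) :=
    fun n => MeasurableSet.univ_pi fun _ => measurableSet_Ioo
  have hpos_meas : MeasurableSet (posOrthant N) :=
    MeasurableSet.univ_pi fun _ => measurableSet_Ioi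
  have hvdm_meas : Measurable (fun s : Fin N → ℝ => vdm N (2 * lam) s) := by
    apply Finset.measurable_prod
    intro q _
    fun_prop
  have hesym_meas : Measurable (fun s : Fin N → ℝ => esym N p (fun l => x - s l)) := by
    apply Finset.measurable_sum
    intro S _
    apply Finset.measurable_prod
    intro j _
    fun_prop
  have hGn_meas : ∀ n : ℕ, Measurable (Gn n) := by
    intro n
    apply Measurable.mul (Measurable.mul ?_ hvdm_meas) hesym_meas
    apply Finset.measurable_prod
    intro l _
    fun_prop
  -- the pointwise bound
  have hptbd : ∀ (n : ℕ) (s : Fin N → ℝ), ‖F n s‖ ≤ B s := by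
    intro n s
    have hBnn : 0 ≤ B s := by
      apply Finset.prod_nonneg
      intro l _
      apply Set.indicator_nonneg
      intro u hu
      have hu0 : (0:ℝ) < u := hu
      have h1 : (0:ℝ) ≤ u ^ b := Real.rpow_nonneg hu0.le b
      have h2 := (Real.exp_pos (-lam * u)).le
      have h3 := Real.rpow_nonneg (abs_nonneg (x - u)) (α - 1)
      have h4 := Real.rpow_nonneg (by linarith : (0:ℝ) ≤ 1 + u) M
      have h5 : (0:ℝ) ≤ 1 + x + u := by linarith
      positivity
    by_cases hs : s ∈ cube n
    swap
    · rw [hF]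
      simp only
      rw [Set.indicator_of_notMem hs, norm_zero]
      exact hBnn
    have hco : ∀ l, 0 < s l ∧ s l < (n:ℝ) := fun l => hs l (Set.mem_univ l)
    have hn0 : (0:ℝ) < n := lt_trans (hco ⟨0, hN⟩).1 (hco ⟨0, hN⟩).2
    have hwt : ∀ l : Fin N, (1 - s l / n) ^ (lam * (n:ℝ)) ≤ Real.exp (-lam * s l) := by
      intro l
      have h1 : (0:ℝ) ≤ 1 - s l / n := by
        rw [sub_nonneg, div_le_one hn0]; exact (hco l).2.le
      have h2 : 1 - s l / n ≤ Real.exp (-(s l / n)) := by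
        have := Real.add_one_le_exp (-(s l / n)); linarith
      calc (1 - s l / n) ^ (lam * (n:ℝ)) ≤ (Real.exp (-(s l / n))) ^ (lam * (n:ℝ)) :=
            Real.rpow_le_rpow h1 h2 (by positivity)
        _ = Real.exp (-(s l / n) * (lam * (n:ℝ))) := (Real.exp_mul _ _).symm
        _ = Real.exp (-lam * s l) := by
            congr 1
            field_simp
    have hfac_nn : ∀ l : Fin N,
        0 ≤ s l ^ b * (1 - s l / (n:ℝ)) ^ (lam * (n:ℝ)) * |x - s l| ^ (α - 1) := by
      intro l
      have h1 : (0:ℝ) ≤ 1 - s l / ↑n := by rw [sub_nonneg, div_le_one hn0]; exact (hco l).2.le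
      exact mul_nonneg (mul_nonneg (Real.rpow_nonneg (hco l).1.le b)
        (Real.rpow_nonneg h1 _)) (Real.rpow_nonneg (abs_nonneg _) _)
    have hprod1 : (∏ l, s l ^ b * (1 - s l / (n:ℝ)) ^ (lam * (n:ℝ)) * |x - s l| ^ (α - 1))
        ≤ ∏ l, s l ^ b * Real.exp (-lam * s l) * |x - s l| ^ (α - 1) := by
      apply Finset.prod_le_prod (fun l _ => hfac_nn l)
      intro l _
      apply mul_le_mul_of_nonneg_right ?_ (Real.rpow_nonneg (abs_nonneg _) _)
      exact mul_le_mul_of_nonneg_left (hwt l) (Real.rpow_nonneg (hco l).1.le b)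
    have hprod1nn : 0 ≤ ∏ l, s l ^ b * (1 - s l / (n:ℝ)) ^ (lam * (n:ℝ)) * |x - s l| ^ (α - 1) :=
      Finset.prod_nonneg fun l _ => hfac_nn l
    have hprod2nn : 0 ≤ ∏ l, s l ^ b * Real.exp (-lam * s l) * |x - s l| ^ (α - 1) := by
      apply Finset.prod_nonneg
      intro l _
      exact mul_nonneg (mul_nonneg (Real.rpow_nonneg (hco l).1.le b)
        (Real.exp_pos _).le) (Real.rpow_nonneg (abs_nonneg _) _)
    set Q : ℝ := ∏ l, (1 + s l) with hQ
    have hQl : ∀ l : Fin N, (1:ℝ) ≤ 1 + s l := fun l => by linarith [(hco l).1]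
    have hQnn : 0 ≤ Q := Finset.prod_nonneg fun l _ => by linarith [hQl l]
    have hvdm_nn : 0 ≤ vdm N (2*lam) s :=
      Finset.prod_nonneg fun q _ => Real.rpow_nonneg (abs_nonneg _) _
    have hvdm_le : vdm N (2 * lam) s ≤ ∏ l, (1 + s l) ^ M := by
      have step1 : vdm N (2 * lam) s ≤ ∏ _q ∈ prs, Q ^ (2 * lam) := by
        rw [vdm, ← hprs]
        apply Finset.prod_le_prod (fun q _ => Real.rpow_nonneg (abs_nonneg _) _)
        intro q hq
        apply Real.rpow_le_rpow (abs_nonneg _) ?_ (by positivity)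
        have hq12 : q.1 < q.2 := by
          rw [hprs] at hq
          exact (Finset.mem_filter.mp hq).2
        have hne : q.1 ≠ q.2 := ne_of_lt hq12
        have h1 : |s q.2 - s q.1| ≤ s q.1 + s q.2 := by
          have h := abs_sub (s q.2) (s q.1)
          rw [abs_of_pos (hco q.2).1, abs_of_pos (hco q.1).1] at h
          linarith
        have h2 : s q.1 + s q.2 ≤ (1 + s q.1) * (1 + s q.2) := by
          nlinarith [(hco q.1).1, (hco q.2).1]
        have h3 : (1 + s q.1) * (1 + s q.2) = ∏ l ∈ ({q.1, q.2} : Finset (Fin N)), (1 + s l) := by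
          rw [Finset.prod_pair hne]
        have h4 : (∏ l ∈ ({q.1, q.2} : Finset (Fin N)), (1 + s l)) ≤ Q := by
          rw [hQ, ← Finset.prod_mul_prod_compl ({q.1, q.2} : Finset (Fin N))
            (fun l => 1 + s l)]
          have hB1 : (1:ℝ) ≤ ∏ l ∈ ({q.1, q.2} : Finset (Fin N))ᶜ, (1 + s l) := by
            calc (1:ℝ) = ∏ _l ∈ ({q.1, q.2} : Finset (Fin N))ᶜ, (1:ℝ) :=
                  (Finset.prod_const_one).symm
              _ ≤ ∏ l ∈ ({q.1, q.2} : Finset (Fin N))ᶜ, (1 + s l) :=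
                  Finset.prod_le_prod (fun i _ => zero_le_one) (fun i _ => hQl i)
          exact le_mul_of_one_le_right
            (Finset.prod_nonneg fun i _ => by linarith [hQl i]) hB1
        linarith
      have step2 : (∏ _q ∈ prs, Q ^ (2*lam)) = Q ^ M := by
        rw [Finset.prod_const, ← hPdef, ← Real.rpow_natCast (Q ^ (2*lam)) P,
          ← Real.rpow_mul hQnn, hM]
      have step3 : Q ^ M = ∏ l, (1 + s l) ^ M :=
        (Real.finset_prod_rpow _ _ (fun l _ => by linarith [hQl l]) M).symm
      calc vdm N (2 * lam) s ≤ ∏ _q ∈ prs, Q ^ (2 * lam) := step1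
        _ = Q ^ M := step2
        _ = ∏ l, (1 + s l) ^ M := step3
    have hesym_le : |esym N p (fun l => x - s l)| ≤ ∏ l, (1 + x + s l) := by
      have hexp := Finset.prod_add (fun j : Fin N => x + s j) (fun _ => (1:ℝ)) Finset.univ
      simp only [Finset.prod_const_one, mul_one] at hexp
      rw [esym]
      calc |∑ S ∈ Finset.univ.powersetCard p, ∏ j ∈ S, (x - s j)|
          ≤ ∑ S ∈ Finset.univ.powersetCard p, |∏ j ∈ S, (x - s j)| :=
            Finset.abs_sum_le_sum_abs _ _
        _ = ∑ S ∈ Finset.univ.powersetCard p, ∏ j ∈ S, |x - s j| := by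
            apply Finset.sum_congr rfl; intro S _; rw [Finset.abs_prod]
        _ ≤ ∑ S ∈ Finset.univ.powersetCard p, ∏ j ∈ S, (x + s j) := by
            apply Finset.sum_le_sum; intro S _
            apply Finset.prod_le_prod (fun j _ => abs_nonneg _)
            intro j _
            calc |x - s j| ≤ |x| + |s j| := abs_sub _ _
              _ = x + s j := by rw [abs_of_pos hx, abs_of_pos (hco j).1]
        _ ≤ ∑ S ∈ (Finset.univ : Finset (Fin N)).powerset, ∏ j ∈ S, (x + s j) := by
            apply Finset.sum_le_sum_of_subset_of_nonneg
            · rw [Finset.powersetCard_eq_filter]; exact Finset.filter_subset _ _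
            · intro S _ _
              exact Finset.prod_nonneg fun j _ => by linarith [(hco j).1]
        _ = ∏ l, (x + s l + 1) := hexp.symm
        _ = ∏ l, (1 + x + s l) := by apply Finset.prod_congr rfl; intro l _; ring
    rw [hF]
    simp only
    rw [Set.indicator_of_mem hs]
    rw [hGn]
    simp only
    rw [Real.norm_eq_abs, abs_mul, abs_mul, abs_of_nonneg hprod1nn, abs_of_nonneg hvdm_nn]
    have hmul : (∏ l, s l ^ b * (1 - s l / (n:ℝ)) ^ (lam * (n:ℝ)) * |x - s l| ^ (α - 1))
          * vdm N (2*lam) s * |esym N p (fun l => x - s l)|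
        ≤ (∏ l, s l ^ b * Real.exp (-lam * s l) * |x - s l| ^ (α - 1))
          * (∏ l, (1 + s l) ^ M) * (∏ l, (1 + x + s l)) := by
      apply mul_le_mul (mul_le_mul hprod1 hvdm_le hvdm_nn hprod2nn) hesym_le (abs_nonneg _)
      exact mul_nonneg hprod2nn (Finset.prod_nonneg fun l _ =>
        Real.rpow_nonneg (by linarith [hQl l]) M)
    refine le_trans hmul (le_of_eq ?_)
    rw [hB]
    simp only
    rw [← Finset.prod_mul_distrib, ← Finset.prod_mul_distrib]
    apply Finset.prod_congr rfl
    intro l _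
    rw [Set.indicator_of_mem (Set.mem_Ioi.mpr (hco l).1), hg1]
  -- integrability of the bound
  have hBint : Integrable B := by
    apply Integrable.fintype_prod (f := fun _ : Fin N => (Set.Ioi (0 : ℝ)).indicator g1)
    intro _
    rw [integrable_indicator_iff measurableSet_Ioi]
    rw [hg1]
    exact integrable_gbound hlam hα (by rw [hb] at *; exact ha) hM0 hx
  -- pointwise convergence
  have hlim : ∀ s : Fin N → ℝ, Tendsto (fun n : ℕ => F n s) atTop (nhds (Fl s)) := by
    intro s
    by_cases hs : s ∈ posOrthant N
    · have hcoord : ∀ l, 0 < s l := fun l => hs l (Set.mem_univ l)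
      have hev : ∀ᶠ n : ℕ in atTop, s ∈ cube n := by
        have h : ∀ᶠ n : ℕ in atTop, ∀ l, s l < (n:ℝ) := by
          rw [Filter.eventually_all]
          intro l
          exact tendsto_natCast_atTop_atTop.eventually_gt_atTop (s l)
        filter_upwards [h] with n hn
        intro l _
        exact ⟨hcoord l, hn l⟩
      have hmain : Tendsto (fun n : ℕ => Gn n s) atTop (nhds (G s)) := by
        rw [hGn, hG]
        simp only
        apply Tendsto.mul (Tendsto.mul ?_ tendsto_const_nhds) tendsto_const_nhds
        apply tendsto_finset_prod
        intro l _
        exact Tendsto.mul (Tendsto.mul tendsto_const_nhds (tendsto_weight lam (s l)))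
          tendsto_const_nhds
      rw [hFl]
      rw [Set.indicator_of_mem hs]
      apply hmain.congr'
      filter_upwards [hev] with n hn
      rw [hF]
      simp only
      rw [Set.indicator_of_mem hn]
    · have h0 : ∀ n, F n s = 0 := by
        intro n
        rw [hF]
        simp only
        apply Set.indicator_of_notMem
        intro hmem
        apply hs
        intro l _
        exact (hmem l (Set.mem_univ l)).1
      have h0' : Fl s = 0 := Set.indicator_of_notMem hs _
      rw [h0']
      simp only [h0]
      exact tendsto_const_nhds
  -- dominated convergence
  have hDCT : Tendsto (fun n : ℕ => ∫ s, F n s) atTop (nhds (∫ s, Fl s)) := by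
    apply tendsto_integral_of_dominated_convergence B
      (fun n => ((hGn_meas n).indicator (hcube_meas n)).aestronglyMeasurable) hBint
    · intro n
      exact Eventually.of_forall (hptbd n)
    · exact Eventually.of_forall hlim
  -- identification of the limit
  have hLaux : Laux N lam α a p x = c * ∫ s, Fl s := by
    rw [Laux]
    simp only [hFl, hG, hb]
    rw [integral_indicator hpos_meas]
  -- the scaling identity
  have hscale : ∀ n : ℕ, 1 ≤ n →
      (n : ℝ) ^ E * Jaux N lam α b (lam * (n : ℝ)) p (x / (n : ℝ)) = c * ∫ s, F n s := by
    intro n hn1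
    have hn0 : (0:ℝ) < n := by exact_mod_cast Nat.lt_of_lt_of_le Nat.zero_lt_one hn1
    have hnne : (n:ℝ) ≠ 0 := hn0.ne'
    rw [hF]
    simp only
    rw [integral_indicator (hcube_meas n)]
    rw [Jaux]
    set Fn : (Fin N → ℝ) → ℝ := fun t =>
      (∏ l, t l ^ b * (1 - t l) ^ (lam * (n:ℝ)) * |x / (n:ℝ) - t l| ^ (α - 1)) *
        vdm N (2 * lam) t * esym N p (fun l => x / (n:ℝ) - t l) with hFn
    have hsetsmul : ((n:ℝ)⁻¹) • cube n = unitCube N := by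
      ext t
      rw [Set.mem_smul_set_iff_inv_smul_mem₀ (inv_ne_zero hnne), inv_inv]
      constructor
      · intro h l _
        have h2 := h l (Set.mem_univ l)
        simp only [Pi.smul_apply, smul_eq_mul] at h2
        constructor
        · nlinarith [h2.1]
        · have := h2.2
          nlinarith
      · intro h l _
        have h2 := h l (Set.mem_univ l)
        simp only [Pi.smul_apply, smul_eq_mul]
        constructor
        · exact mul_pos hn0 h2.1
        · nlinarith [h2.2]
    have hchg := MeasureTheory.Measure.setIntegral_comp_smul_of_pos volume Fn (cube n)
      (inv_pos.mpr hn0)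
    rw [hsetsmul, Module.finrank_fin_fun] at hchg
    have hintcube : ∫ t in unitCube N, Fn t
        = ((n:ℝ)⁻¹ ^ N) • ∫ s in cube n, Fn ((n:ℝ)⁻¹ • s) := by
      rw [hchg, smul_smul, mul_inv_cancel₀ (by positivity), one_smul]
    rw [hintcube, smul_eq_mul]
    set I : ℝ := ∫ s in cube n, Fn ((n:ℝ)⁻¹ • s) with hI
    set K : ℝ := (n:ℝ) ^ (E - (N:ℝ)) with hKdef
    have hK : (n:ℝ) ^ E * ((n:ℝ)⁻¹) ^ N = K := by
      rw [hKdef, ← Real.rpow_natCast ((n:ℝ)⁻¹) N, ← Real.rpow_neg_one (n:ℝ),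
        ← Real.rpow_mul hn0.le, ← Real.rpow_add hn0]
      ring_nf
    have hrearr : (n:ℝ) ^ E * (c * (((n:ℝ)⁻¹) ^ N * I)) = c * (K * I) := by
      rw [← hK]; ring
    rw [hrearr]
    congr 1
    rw [hI, ← integral_const_mul]
    apply setIntegral_congr_fun (hcube_meas n)
    intro s hs
    have hco : ∀ l, 0 < s l ∧ s l < (n:ℝ) := fun l => hs l (Set.mem_univ l)
    have hsmul_app : ∀ l, ((n:ℝ)⁻¹ • s) l = s l / (n:ℝ) := fun l => by
      simp [div_eq_inv_mul]
    -- the three scaling identities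
    have hA : (∏ l, (s l / (n:ℝ)) ^ b * (1 - s l / (n:ℝ)) ^ (lam * (n:ℝ))
          * |x / (n:ℝ) - s l / (n:ℝ)| ^ (α - 1))
        = (n:ℝ) ^ (-(b + (α - 1)) * (N:ℝ))
          * ∏ l, s l ^ b * (1 - s l / (n:ℝ)) ^ (lam * (n:ℝ)) * |x - s l| ^ (α - 1) := by
      have hAl : ∀ l : Fin N, (s l / (n:ℝ)) ^ b * (1 - s l / (n:ℝ)) ^ (lam * (n:ℝ))
            * |x / (n:ℝ) - s l / (n:ℝ)| ^ (α - 1)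
          = (n:ℝ) ^ (-(b + (α-1)))
            * (s l ^ b * (1 - s l / (n:ℝ)) ^ (lam * (n:ℝ)) * |x - s l| ^ (α - 1)) := by
        intro l
        have h1 : (s l / (n:ℝ)) ^ b = s l ^ b * (n:ℝ) ^ (-b) := by
          rw [Real.div_rpow (hco l).1.le hn0.le, Real.rpow_neg hn0.le, div_eq_mul_inv]
        have h2 : |x / (n:ℝ) - s l / (n:ℝ)| ^ (α-1) = |x - s l| ^ (α-1) * (n:ℝ) ^ (-(α-1)) := by
          rw [show x / (n:ℝ) - s l / (n:ℝ) = (x - s l) / (n:ℝ) by ring, abs_div,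
            abs_of_pos hn0, Real.div_rpow (abs_nonneg _) hn0.le, Real.rpow_neg hn0.le,
            div_eq_mul_inv]
        rw [h1, h2, show (n:ℝ) ^ (-(b+(α-1))) = (n:ℝ) ^ (-b) * (n:ℝ) ^ (-(α-1)) by
          rw [← Real.rpow_add hn0]; ring_nf]
        ring
      rw [Finset.prod_congr rfl (fun l _ => hAl l), Finset.prod_mul_distrib,
        Finset.prod_const, Finset.card_univ, Fintype.card_fin,
        ← Real.rpow_natCast ((n:ℝ) ^ (-(b+(α-1)))) N, ← Real.rpow_mul hn0.le]
    have hBv : vdm N (2 * lam) ((n:ℝ)⁻¹ • s)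
        = (n:ℝ) ^ ((-2 * lam) * (P:ℝ)) * vdm N (2 * lam) s := by
      rw [vdm, vdm, ← hprs]
      have hBq : ∀ q : Fin N × Fin N,
          |((n:ℝ)⁻¹ • s) q.2 - ((n:ℝ)⁻¹ • s) q.1| ^ (2 * lam)
          = (n:ℝ) ^ (-(2 * lam)) * |s q.2 - s q.1| ^ (2 * lam) := by
        intro q
        have h1 : ((n:ℝ)⁻¹ • s) q.2 - ((n:ℝ)⁻¹ • s) q.1 = (n:ℝ)⁻¹ * (s q.2 - s q.1) := by
          simp only [Pi.smul_apply, smul_eq_mul]; ring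
        rw [h1, abs_mul, abs_of_pos (inv_pos.mpr hn0),
          Real.mul_rpow (inv_pos.mpr hn0).le (abs_nonneg _),
          Real.inv_rpow hn0.le, ← Real.rpow_neg hn0.le]
      rw [Finset.prod_congr rfl (fun q _ => hBq q), Finset.prod_mul_distrib,
        Finset.prod_const, ← hPdef, ← Real.rpow_natCast ((n:ℝ) ^ (-(2*lam))) P,
        ← Real.rpow_mul hn0.le]
      ring_nf
    have hCe : esym N p (fun l => x / (n:ℝ) - s l / (n:ℝ))
        = (n:ℝ) ^ (-(p:ℝ)) * esym N p (fun l => x - s l) := by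
      rw [esym, esym, Finset.mul_sum]
      apply Finset.sum_congr rfl
      intro S hS
      have hcard : S.card = p := (Finset.mem_powersetCard.mp hS).2
      have h1 : ∀ j ∈ S, x / (n:ℝ) - s j / (n:ℝ) = (n:ℝ)⁻¹ * (x - s j) := by
        intro j _
        field_simp
      rw [Finset.prod_congr rfl h1, Finset.prod_mul_distrib, Finset.prod_const, hcard]
      congr 1
      rw [← Real.rpow_natCast ((n:ℝ)⁻¹) p, Real.inv_rpow hn0.le, ← Real.rpow_neg hn0.le]
    have hKcollect : K * ((n:ℝ) ^ (-(b + (α-1)) * (N:ℝ)) * ((n:ℝ) ^ ((-2*lam) * (P:ℝ))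
        * (n:ℝ) ^ (-(p:ℝ)))) = 1 := by
      rw [hKdef, ← Real.rpow_add hn0, ← Real.rpow_add hn0, ← Real.rpow_add hn0]
      rw [show E - (N:ℝ) + (-(b + (α-1)) * (N:ℝ) + ((-2*lam) * (P:ℝ) + -(p:ℝ))) = 0 from by
        rw [hE, hb]; linear_combination (-lam) * hP2]
      exact Real.rpow_zero _
    calc K * Fn ((n:ℝ)⁻¹ • s)
        = K * ((∏ l, (s l / (n:ℝ)) ^ b * (1 - s l / (n:ℝ)) ^ (lam * (n:ℝ))
              * |x / (n:ℝ) - s l / (n:ℝ)| ^ (α - 1)) *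
            vdm N (2 * lam) ((n:ℝ)⁻¹ • s) * esym N p (fun l => x / (n:ℝ) - s l / (n:ℝ))) := by
          rw [hFn]
          simp only [hsmul_app]
      _ = (K * ((n:ℝ) ^ (-(b + (α-1)) * (N:ℝ)) * ((n:ℝ) ^ ((-2*lam) * (P:ℝ))
              * (n:ℝ) ^ (-(p:ℝ)))))
            * ((∏ l, s l ^ b * (1 - s l / (n:ℝ)) ^ (lam * (n:ℝ)) * |x - s l| ^ (α - 1)) *
              vdm N (2 * lam) s * esym N p (fun l => x - s l)) := by
          rw [hA, hBv, hCe]; ring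
      _ = Gn n s := by
          rw [hKcollect, one_mul, hGn]
  rw [hLaux]
  apply Tendsto.congr' ?_ (hDCT.const_mul c)
  filter_upwards [eventually_ge_atTop 1] with n hn
  exact (hscale n hn).symm
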